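/- Under the fitted mixed-propensity model, for every group r ∈ G, the expected number of sampled within-group directed paths of length 2 that do not traverse the same edge twice satisfies E[ Σ_{j∈N} Σ_{i,k : g i = g k = r, ¬(i = j ∧ j = k)} Â i j · Â j k + Σ_{j : g j = r} Â j j (Â j j − 1) ] = Σ_{j∈N} d_{j,r}^i · d_{j,r}^o. In particular, if A has no self-loops (A i i = 0 for all i), the right-hand side equals the observed number of within-group-r directed paths of length 2. -/

import Mathlib

open MeasureTheory ProbabilityTheory
open scoped ProbabilityTheory NNReal

/-- Out-degree of node `i` to group `s`: `d_{i,s}^o = ∑_{j : g j = s} A i j`. -/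
def dOut {N G : Type*} [Fintype N] [DecidableEq G] (g : N → G) (a : N → N → ℕ)
    (i : N) (s : G) : ℕ := ∑ j ∈ Finset.univ.filter (fun j => g j = s), a i j

/-- In-degree of node `i` from group `s`: `d_{i,s}^i = ∑_{j : g j = s} A j i`. -/
def dIn {N G : Type*} [Fintype N] [DecidableEq G] (g : N → G) (a : N → N → ℕ)
    (i : N) (s : G) : ℕ := ∑ j ∈ Finset.univ.filter (fun j => g j = s), a j i

/-- Number of edges from group `r` to group `s`. -/
def mEdges {N G : Type*} [Fintype N] [DecidableEq G] (g : N → G) (a : N → N → ℕ)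
    (r s : G) : ℕ :=
  ∑ i ∈ Finset.univ.filter (fun i => g i = r),
    ∑ j ∈ Finset.univ.filter (fun j => g j = s), a i j

/-- The number of within-group-`r` directed paths of length 2 of a matrix `b` (with real
entries) that do not traverse the same edge twice: pairs `(i, k)` in group `r` with middle
node `j`, excluding the double use `i = j = k` of a self-loop, plus the paths
`A j j (A j j − 1)` using two distinct self-loops at `j`. -/
def pathsTwoWithin {N G : Type*} [Fintype N] [DecidableEq N] [DecidableEq G]
    (g : N → G) (b : N → N → ℝ) (r : G) : ℝ :=
  (∑ j : N, ∑ p ∈ Finset.univ.filter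
      (fun p : N × N => g p.1 = r ∧ g p.2 = r ∧ ¬(p.1 = j ∧ j = p.2)),
      b p.1 j * b j p.2)
    + ∑ j ∈ Finset.univ.filter (fun j => g j = r), b j j * (b j j - 1)

/-! ### Auxiliary lemmas -/

section Aux

open Real

lemma pois_hasSum_id (r : ℝ≥0) :
    HasSum (fun n : ℕ => (n : ℝ) * poissonPMFReal r n) (r : ℝ) := by
  have h0 : HasSum (fun n : ℕ => (r:ℝ) * poissonPMFReal r n) ((r:ℝ) * 1) :=
    (poissonPMFRealSum r).mul_left _
  have h1 : HasSum (fun n : ℕ => (((n+1 : ℕ)) : ℝ) * poissonPMFReal r (n+1)) ((r:ℝ)) := by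
    have he : (fun n : ℕ => (((n+1 : ℕ)) : ℝ) * poissonPMFReal r (n+1))
        = fun n : ℕ => (r:ℝ) * poissonPMFReal r n := by
      funext n
      simp only [poissonPMFReal, Nat.factorial_succ, pow_succ, Nat.cast_mul]
      push_cast
      field_simp
    rw [he]; simpa using h0
  have := (hasSum_nat_add_iff (f := fun m : ℕ => (m:ℝ) * poissonPMFReal r m) 1).mp h1
  simpa using this

lemma pois_hasSum_fact2 (r : ℝ≥0) :
    HasSum (fun n : ℕ => ((n : ℝ) * ((n:ℝ) - 1)) * poissonPMFReal r n) ((r : ℝ)^2) := by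
  have h0 : HasSum (fun n : ℕ => (r:ℝ)^2 * poissonPMFReal r n) ((r:ℝ)^2 * 1) :=
    (poissonPMFRealSum r).mul_left _
  have h1 : HasSum (fun n : ℕ =>
      ((((n+2 : ℕ)) : ℝ) * (((n+2:ℕ):ℝ) - 1)) * poissonPMFReal r (n+2)) ((r:ℝ)^2) := by
    have he : (fun n : ℕ => ((((n+2 : ℕ)) : ℝ) * (((n+2:ℕ):ℝ) - 1)) * poissonPMFReal r (n+2))
        = fun n : ℕ => (r:ℝ)^2 * poissonPMFReal r n := by
      funext n
      simp only [poissonPMFReal, Nat.factorial_succ, pow_succ, Nat.cast_mul]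
      push_cast
      field_simp
      ring
    rw [he]; simpa using h0
  have := (hasSum_nat_add_iff
    (f := fun m : ℕ => ((m:ℝ) * ((m:ℝ)-1)) * poissonPMFReal r m) 2).mp h1
  simp only [Finset.sum_range_succ, Finset.range_one, Finset.sum_singleton] at this
  norm_num at this
  exact this

lemma pois_pmf_toReal (r : ℝ≥0) (n : ℕ) :
    (poissonPMF r n).toReal = poissonPMFReal r n := by
  show (ENNReal.ofReal (poissonPMFReal r n)).toReal = _
  rw [ENNReal.toReal_ofReal poissonPMFReal_nonneg]

lemma pois_integrable_integral (r : ℝ≥0) (f : ℕ → ℝ) (hf : ∀ n, 0 ≤ f n) (c : ℝ)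
    (h : HasSum (fun n => f n * poissonPMFReal r n) c) :
    Integrable f (poissonMeasure r) ∧ ∫ n, f n ∂(poissonMeasure r) = c := by
  have hint : Integrable f (poissonMeasure r) := by
    constructor
    · exact (measurable_from_top (f := f)).stronglyMeasurable.aestronglyMeasurable
    · rw [HasFiniteIntegral, lintegral_countable']
      have hμ : ∀ n : ℕ, (poissonMeasure r) {n} = ENNReal.ofReal (poissonPMFReal r n) := by
        intro n
        rw [poissonMeasure_singleton]
        rfl
      have : ∀ n : ℕ, ‖f n‖ₑ * (poissonMeasure r) {n}
          = ENNReal.ofReal (f n * poissonPMFReal r n) := by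
        intro n
        rw [hμ, ENNReal.ofReal_mul (hf n)]
        congr 1
        rw [← ofReal_norm, Real.norm_of_nonneg (hf n)]
      rw [tsum_congr this, ← ENNReal.ofReal_tsum_of_nonneg
        (fun n => mul_nonneg (hf n) poissonPMFReal_nonneg) h.summable]
      exact ENNReal.ofReal_lt_top
  refine ⟨hint, ?_⟩
  rw [integral_poissonMeasure' hint]
  refine Eq.trans (tsum_congr fun n => ?_) h.tsum_eq
  rw [smul_eq_mul, mul_comm]
  rfl

lemma pois_map_integrable_integral {Ω : Type*} [MeasureSpace Ω]
    (X : Ω → ℕ) (r : ℝ≥0) (hmap : Measure.map X ℙ = poissonMeasure r)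
    (f : ℕ → ℝ) (c : ℝ)
    (hint : Integrable f (poissonMeasure r)) (hI : ∫ n, f n ∂(poissonMeasure r) = c) :
    Integrable (fun ω => f (X ω)) ℙ ∧ ∫ ω, f (X ω) ∂ℙ = c := by
  have hX : AEMeasurable X ℙ := by
    by_contra h'
    rw [Measure.map_of_not_aemeasurable h'] at hmap
    have h1 := congrArg (fun μ : Measure ℕ => μ Set.univ) hmap
    simp at h1
  have hsm : AEStronglyMeasurable f (Measure.map X ℙ) :=
    (measurable_from_top (f := f)).stronglyMeasurable.aestronglyMeasurable
  constructor
  · exact (integrable_map_measure hsm hX).mp (by rwa [hmap])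
  · rw [← integral_map hX hsm, hmap, hI]

lemma sum_pairs_filter_key {N G : Type*} [Fintype N] [DecidableEq N] [DecidableEq G]
    (g : N → G) (r : G) (j : N) (u v : N → ℝ) :
    ∑ p ∈ Finset.univ.filter
        (fun p : N × N => g p.1 = r ∧ g p.2 = r ∧ ¬(p.1 = j ∧ j = p.2)), u p.1 * v p.2
      = (∑ i ∈ Finset.univ.filter (fun i => g i = r), u i)
          * (∑ k ∈ Finset.univ.filter (fun k => g k = r), v k)
        - (if g j = r then u j * v j else 0) := by
  classical
  set s : Finset (N × N) := Finset.univ.filter (fun p : N × N => g p.1 = r ∧ g p.2 = r) with hs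
  have hsplit := Finset.sum_filter_add_sum_filter_not s
      (fun p : N × N => p.1 = j ∧ j = p.2) (fun p : N × N => u p.1 * v p.2)
  have h1 : s.filter (fun p : N × N => ¬(p.1 = j ∧ j = p.2))
      = Finset.univ.filter
        (fun p : N × N => g p.1 = r ∧ g p.2 = r ∧ ¬(p.1 = j ∧ j = p.2)) := by
    rw [hs, Finset.filter_filter]
    apply Finset.filter_congr
    intro p _
    tauto
  have h2 : ∑ p ∈ s.filter (fun p : N × N => p.1 = j ∧ j = p.2), u p.1 * v p.2
      = if g j = r then u j * v j else 0 := by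
    by_cases hgj : g j = r
    · rw [if_pos hgj]
      have : s.filter (fun p : N × N => p.1 = j ∧ j = p.2) = {(j, j)} := by
        ext p
        simp only [hs, Finset.mem_filter, Finset.mem_univ, true_and, Finset.mem_singleton]
        constructor
        · rintro ⟨_, h3, h4⟩; exact Prod.ext h3 h4.symm
        · rintro rfl; exact ⟨⟨hgj, hgj⟩, rfl, rfl⟩
      rw [this, Finset.sum_singleton]
    · rw [if_neg hgj]
      apply Finset.sum_eq_zero
      intro p hp
      simp only [hs, Finset.mem_filter, Finset.mem_univ, true_and] at hp
      exact absurd (hp.2.1 ▸ hp.1.1) hgj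
  have h3 : ∑ p ∈ s, u p.1 * v p.2
      = (∑ i ∈ Finset.univ.filter (fun i => g i = r), u i)
          * (∑ k ∈ Finset.univ.filter (fun k => g k = r), v k) := by
    rw [Finset.sum_mul_sum]
    have : s = (Finset.univ.filter (fun i => g i = r)) ×ˢ
        (Finset.univ.filter (fun k => g k = r)) := by
      ext p
      simp [hs, Finset.mem_product]
    rw [this, Finset.sum_product]
  rw [h1, h2] at hsplit
  linarith

/-- The mean of `Âᵢⱼ` as a real number. -/
noncomputable def lamR {N G : Type*} [Fintype N] [DecidableEq G] (g : N → G) (a : N → N → ℕ)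
    (i j : N) : ℝ :=
  ((dOut g a i (g j) * dIn g a j (g i) : ℕ) : ℝ) / ((mEdges g a (g i) (g j) : ℕ) : ℝ)

lemma lamR_sum_in {N G : Type*} [Fintype N] [DecidableEq G] (g : N → G) (a : N → N → ℕ)
    (hm : ∀ r s : G, 0 < mEdges g a r s) (r : G) (j : N) :
    ∑ i ∈ Finset.univ.filter (fun i => g i = r), lamR g a i j = (dIn g a j r : ℝ) := by
  have hne : ((mEdges g a r (g j) : ℕ) : ℝ) ≠ 0 := by
    exact_mod_cast (hm r (g j)).ne'
  have hstep : ∀ i ∈ Finset.univ.filter (fun i => g i = r),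
      lamR g a i j = ((dOut g a i (g j) : ℕ) : ℝ)
        * ((dIn g a j r : ℝ) / ((mEdges g a r (g j) : ℕ) : ℝ)) := by
    intro i hi
    simp only [Finset.mem_filter] at hi
    rw [lamR, hi.2]
    push_cast
    ring
  rw [Finset.sum_congr rfl hstep, ← Finset.sum_mul]
  have hM : (∑ i ∈ Finset.univ.filter (fun i => g i = r), ((dOut g a i (g j) : ℕ) : ℝ))
      = ((mEdges g a r (g j) : ℕ) : ℝ) := by
    rw [← Nat.cast_sum]
    rfl
  rw [hM]
  field_simp

lemma lamR_sum_out {N G : Type*} [Fintype N] [DecidableEq G] (g : N → G) (a : N → N → ℕ)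
    (hm : ∀ r s : G, 0 < mEdges g a r s) (r : G) (j : N) :
    ∑ k ∈ Finset.univ.filter (fun k => g k = r), lamR g a j k = (dOut g a j r : ℝ) := by
  have hne : ((mEdges g a (g j) r : ℕ) : ℝ) ≠ 0 := by
    exact_mod_cast (hm (g j) r).ne'
  have hstep : ∀ k ∈ Finset.univ.filter (fun k => g k = r),
      lamR g a j k = ((dIn g a k (g j) : ℕ) : ℝ)
        * ((dOut g a j r : ℝ) / ((mEdges g a (g j) r : ℕ) : ℝ)) := by
    intro k hk
    simp only [Finset.mem_filter] at hk
    rw [lamR, hk.2]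
    push_cast
    ring
  rw [Finset.sum_congr rfl hstep, ← Finset.sum_mul]
  have hM : (∑ k ∈ Finset.univ.filter (fun k => g k = r), ((dIn g a k (g j) : ℕ) : ℝ))
      = ((mEdges g a (g j) r : ℕ) : ℝ) := by
    rw [← Nat.cast_sum]
    congr 1
    rw [mEdges, Finset.sum_comm]
    rfl
  rw [hM]
  field_simp

end Aux

/-- under the fitted mixed-propensity model, the expected number of
sampled within-group-`r` directed paths of length 2 not traversing an edge twice equals
`∑_j d_{j,r}^i d_{j,r}^o`; in particular, if `A` has no self-loops, this equals the
observed number of within-group-`r` paths of length 2. -/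
theorem expected_paths_two_within_group
    {Ω : Type*} [MeasureSpace Ω] [IsProbabilityMeasure (ℙ : Measure Ω)]
    {N G : Type*} [Fintype N] [DecidableEq N] [Fintype G] [DecidableEq G]
    (g : N → G) (a : N → N → ℕ)
    (hm : ∀ r s : G, 0 < mEdges g a r s)
    (Ahat : N → N → Ω → ℕ)
    (hindep : iIndepFun (fun p : N × N => Ahat p.1 p.2) ℙ)
    (hdist : ∀ i j : N, Measure.map (Ahat i j) ℙ
      = poissonMeasure (((dOut g a i (g j) * dIn g a j (g i) : ℕ) : ℝ≥0)
          / ((mEdges g a (g i) (g j) : ℕ) : ℝ≥0)))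
    (r : G) :
    (∫ x, pathsTwoWithin g (fun i j => (Ahat i j x : ℝ)) r ∂ℙ)
      = ∑ j : N, (dIn g a j r : ℝ) * (dOut g a j r : ℝ) ∧
    ((∀ i : N, a i i = 0) →
      (∑ j : N, (dIn g a j r : ℝ) * (dOut g a j r : ℝ))
        = pathsTwoWithin g (fun i j => (a i j : ℝ)) r) := by
  classical
  -- the NNReal parameter of each entry and its real value
  set rr : N → N → ℝ≥0 := fun i j =>
    ((dOut g a i (g j) * dIn g a j (g i) : ℕ) : ℝ≥0)
      / ((mEdges g a (g i) (g j) : ℕ) : ℝ≥0) with hrr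
  have hrrR : ∀ i j, ((rr i j : ℝ≥0) : ℝ) = lamR g a i j := by
    intro i j
    rw [hrr, lamR]
    push_cast
    ring
  -- first moment of each entry
  have hE1 : ∀ i j, Integrable (fun ω => (Ahat i j ω : ℝ)) ℙ
      ∧ ∫ ω, (Ahat i j ω : ℝ) ∂ℙ = lamR g a i j := by
    intro i j
    obtain ⟨hi1, hi2⟩ := pois_integrable_integral (rr i j) (fun n => (n : ℝ))
      (fun n => Nat.cast_nonneg n) _ (pois_hasSum_id (rr i j))
    have := pois_map_integrable_integral (Ahat i j) (rr i j) (hdist i j)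
      (fun n => (n : ℝ)) _ hi1 hi2
    exact ⟨this.1, this.2.trans (hrrR i j)⟩
  -- second factorial moment of the diagonal entries
  have hE2 : ∀ j, Integrable (fun ω => (Ahat j j ω : ℝ) * ((Ahat j j ω : ℝ) - 1)) ℙ
      ∧ ∫ ω, (Ahat j j ω : ℝ) * ((Ahat j j ω : ℝ) - 1) ∂ℙ = lamR g a j j * lamR g a j j := by
    intro j
    have hfnn : ∀ n : ℕ, (0 : ℝ) ≤ (n : ℝ) * ((n : ℝ) - 1) := by
      intro n
      cases n with
      | zero => norm_num
      | succ m =>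
        have h1 : (0 : ℝ) ≤ (m : ℝ) := Nat.cast_nonneg m
        push_cast
        nlinarith
    obtain ⟨hi1, hi2⟩ := pois_integrable_integral (rr j j)
      (fun n => (n : ℝ) * ((n : ℝ) - 1)) hfnn _ (pois_hasSum_fact2 (rr j j))
    have := pois_map_integrable_integral (Ahat j j) (rr j j) (hdist j j)
      (fun n => (n : ℝ) * ((n : ℝ) - 1)) _ hi1 hi2
    refine ⟨this.1, this.2.trans ?_⟩
    rw [← hrrR j j]
    ring
  -- mixed moments for distinct entry positions
  have hprod : ∀ i j k : N, ¬(i = j ∧ j = k) →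
      Integrable (fun ω => (Ahat i j ω : ℝ) * (Ahat j k ω : ℝ)) ℙ
      ∧ ∫ ω, (Ahat i j ω : ℝ) * (Ahat j k ω : ℝ) ∂ℙ = lamR g a i j * lamR g a j k := by
    intro i j k hne
    have hne' : ((i, j) : N × N) ≠ (j, k) := by
      intro h
      exact hne ⟨congrArg Prod.fst h, congrArg Prod.snd h⟩
    have hind : IndepFun (Ahat i j) (Ahat j k) ℙ := hindep.indepFun hne'
    have hindR : IndepFun (fun ω => (Ahat i j ω : ℝ)) (fun ω => (Ahat j k ω : ℝ)) ℙ :=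
      hind.comp (measurable_from_top (f := (Nat.cast : ℕ → ℝ)))
        (measurable_from_top (f := (Nat.cast : ℕ → ℝ)))
    have hint := hindR.integrable_mul (hE1 i j).1 (hE1 j k).1
    have hIm : ∫ ω, (Ahat i j ω : ℝ) * (Ahat j k ω : ℝ) ∂ℙ
        = (∫ ω, (Ahat i j ω : ℝ) ∂ℙ) * ∫ ω, (Ahat j k ω : ℝ) ∂ℙ :=
      hindR.integral_mul_eq_mul_integral (hE1 i j).1.aestronglyMeasurable
        (hE1 j k).1.aestronglyMeasurable
    rw [(hE1 i j).2, (hE1 j k).2] at hIm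
    exact ⟨hint, hIm⟩
  constructor
  · -- the expectation computation
    simp only [pathsTwoWithin]
    -- integrability of the two parts
    have hintA : ∀ j : N, ∀ p ∈ Finset.univ.filter
        (fun p : N × N => g p.1 = r ∧ g p.2 = r ∧ ¬(p.1 = j ∧ j = p.2)),
        Integrable (fun x => (Ahat p.1 j x : ℝ) * (Ahat j p.2 x : ℝ)) ℙ := by
      intro j p hp
      simp only [Finset.mem_filter] at hp
      exact (hprod p.1 j p.2 hp.2.2.2).1
    have hA : Integrable (fun x => ∑ j : N, ∑ p ∈ Finset.univ.filter
        (fun p : N × N => g p.1 = r ∧ g p.2 = r ∧ ¬(p.1 = j ∧ j = p.2)),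
        (Ahat p.1 j x : ℝ) * (Ahat j p.2 x : ℝ)) ℙ := by
      apply integrable_finset_sum
      intro j _
      exact integrable_finset_sum _ (hintA j)
    have hB : Integrable (fun x => ∑ j ∈ Finset.univ.filter (fun j => g j = r),
        (Ahat j j x : ℝ) * ((Ahat j j x : ℝ) - 1)) ℙ :=
      integrable_finset_sum _ (fun j _ => (hE2 j).1)
    rw [integral_add hA hB, integral_finset_sum _ (fun j _ => integrable_finset_sum _ (hintA j)),
      integral_finset_sum _ (fun j _ => (hE2 j).1)]
    have hAval : ∀ j : N, ∑ p ∈ Finset.univ.filter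
        (fun p : N × N => g p.1 = r ∧ g p.2 = r ∧ ¬(p.1 = j ∧ j = p.2)),
        (∫ x, (Ahat p.1 j x : ℝ) * (Ahat j p.2 x : ℝ) ∂ℙ)
        = (dIn g a j r : ℝ) * (dOut g a j r : ℝ)
          - (if g j = r then lamR g a j j * lamR g a j j else 0) := by
      intro j
      have h1 : ∀ p ∈ Finset.univ.filter
          (fun p : N × N => g p.1 = r ∧ g p.2 = r ∧ ¬(p.1 = j ∧ j = p.2)),
          (∫ x, (Ahat p.1 j x : ℝ) * (Ahat j p.2 x : ℝ) ∂ℙ)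
            = lamR g a p.1 j * lamR g a j p.2 := by
        intro p hp
        simp only [Finset.mem_filter] at hp
        exact (hprod p.1 j p.2 hp.2.2.2).2
      rw [Finset.sum_congr rfl h1,
        sum_pairs_filter_key g r j (fun i => lamR g a i j) (fun k => lamR g a j k),
        lamR_sum_in g a hm r j, lamR_sum_out g a hm r j]
    have hBval : ∀ j : N, (∫ x, (Ahat j j x : ℝ) * ((Ahat j j x : ℝ) - 1) ∂ℙ)
        = lamR g a j j * lamR g a j j := fun j => (hE2 j).2
    rw [Finset.sum_congr rfl
        (fun j _ => (integral_finset_sum _ (hintA j)).trans (hAval j)),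
      Finset.sum_congr rfl (fun j _ => hBval j)]
    rw [Finset.sum_sub_distrib]
    have hcancel : (∑ j : N, (if g j = r then lamR g a j j * lamR g a j j else 0))
        = ∑ j ∈ Finset.univ.filter (fun j => g j = r), lamR g a j j * lamR g a j j := by
      rw [Finset.sum_filter]
    rw [hcancel]
    ring
  · -- the deterministic identity when there are no self-loops
    intro hloop
    simp only [pathsTwoWithin]
    have hB0 : (∑ j ∈ Finset.univ.filter (fun j => g j = r),
        ((a j j : ℝ)) * (((a j j : ℝ)) - 1)) = 0 := by
      apply Finset.sum_eq_zero
      intro j _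
      rw [hloop j]
      norm_num
    have hAval : ∀ j : N, ∑ p ∈ Finset.univ.filter
        (fun p : N × N => g p.1 = r ∧ g p.2 = r ∧ ¬(p.1 = j ∧ j = p.2)),
        ((a p.1 j : ℝ)) * ((a j p.2 : ℝ))
        = (dIn g a j r : ℝ) * (dOut g a j r : ℝ) := by
      intro j
      rw [sum_pairs_filter_key g r j (fun i => (a i j : ℝ)) (fun k => (a j k : ℝ))]
      have hin : (∑ i ∈ Finset.univ.filter (fun i => g i = r), ((a i j : ℝ)))
          = (dIn g a j r : ℝ) := by
        rw [← Nat.cast_sum]; rfl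
      have hout : (∑ k ∈ Finset.univ.filter (fun k => g k = r), ((a j k : ℝ)))
          = (dOut g a j r : ℝ) := by
        rw [← Nat.cast_sum]; rfl
      rw [hin, hout, hloop j]
      norm_num
    rw [hB0, Finset.sum_congr rfl (fun j _ => hAval j)]
    ring
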